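/- Let π(m) = P(Σ_{j∈ℤ} 1{|Y_j| > 1} = m | infargmax(Y) = 0) be the limiting cluster size distribution, and ϑ = P(infargmax(Y) = 0) > 0. If P(lim_{|j|→∞}|Y_j| = 0) = 1, then Σ_{m≥1} m·π(m) = ϑ^{-1} and Σ_{m≥1} m²·π(m) = ϑ^{-1} Σ_{j∈ℤ} P(|Y_j| > 1). -/

import Mathlib

open MeasureTheory Filter
open scoped ENNReal

/-- `infargmax x = 0`. -/
def isAnchorZero {d : ℕ} (x : ℤ → EuclideanSpace ℝ (Fin d)) : Prop :=
  (⨆ i : {i : ℤ // i ≤ 0}, ‖x i‖) = (⨆ i : ℤ, ‖x i‖) ∧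
  ∀ j : ℤ, j < 0 → (⨆ i : {i : ℤ // i ≤ j}, ‖x i‖) ≠ (⨆ i : ℤ, ‖x i‖)

/-- The exceedance functional `E(x) = Σ_{j∈ℤ} 1{|x_j| > 1}`. -/
noncomputable def Exc {d : ℕ} (x : ℤ → EuclideanSpace ℝ (Fin d)) : ℝ :=
  ∑' j : ℤ, if 1 < ‖x j‖ then (1 : ℝ) else 0

namespace Stmt10Aux

variable {d : ℕ}

/-- finitely many exceedances -/
lemma finite_exceed (x : ℤ → EuclideanSpace ℝ (Fin d))
    (hx : Tendsto (fun j : ℤ => ‖x j‖) (cocompact ℤ) (nhds 0)) :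
    {j : ℤ | 1 < ‖x j‖}.Finite := by
  have h : ∀ᶠ j in cofinite, ‖x j‖ < 1 := by
    rw [← cocompact_eq_cofinite ℤ]
    exact hx.eventually_lt_const one_pos
  rw [Filter.eventually_cofinite] at h
  exact h.subset (fun j hj => by simp only [Set.mem_setOf_eq] at *; linarith)

section sups

instance (j : ℤ) : Nonempty {i : ℤ // i ≤ j} := ⟨⟨j, le_rfl⟩⟩

variable (x : ℤ → EuclideanSpace ℝ (Fin d))

noncomputable def runSup (j : ℤ) : ℝ := ⨆ i : {i : ℤ // i ≤ j}, ‖x i‖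

noncomputable def totSup : ℝ := ⨆ i : ℤ, ‖x i‖

variable {x}

lemma bddAbove_range (hfin : {j : ℤ | 1 < ‖x j‖}.Finite) :
    BddAbove (Set.range fun i : ℤ => ‖x i‖) := by
  classical
  refine ⟨max 1 ((insert (0:ℤ) hfin.toFinset).sup' (Finset.insert_nonempty _ _) fun i => ‖x i‖), ?_⟩
  rintro b ⟨i, rfl⟩
  by_cases hi : 1 < ‖x i‖
  · exact le_max_of_le_right (Finset.le_sup' (fun i => ‖x i‖) (Finset.mem_insert_of_mem (hfin.mem_toFinset.2 hi)))
  · exact le_max_of_le_left (not_lt.mp hi)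

lemma bddAbove_sub (hfin : {j : ℤ | 1 < ‖x j‖}.Finite) (j : ℤ) :
    BddAbove (Set.range fun i : {i : ℤ // i ≤ j} => ‖x i‖) := by
  refine (bddAbove_range hfin).mono ?_
  rintro b ⟨i, rfl⟩; exact ⟨i, rfl⟩

lemma norm_le_totSup (hfin : {j : ℤ | 1 < ‖x j‖}.Finite) (i : ℤ) : ‖x i‖ ≤ totSup x :=
  le_ciSup (bddAbove_range hfin) i

lemma runSup_le (hfin : {j : ℤ | 1 < ‖x j‖}.Finite) (j : ℤ) : runSup x j ≤ totSup x :=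
  ciSup_le fun i => norm_le_totSup hfin i.1

lemma norm_le_runSup (hfin : {j : ℤ | 1 < ‖x j‖}.Finite) {i j : ℤ} (h : i ≤ j) :
    ‖x i‖ ≤ runSup x j :=
  le_ciSup (bddAbove_sub hfin j) ⟨i, h⟩

lemma runSup_mono (hfin : {j : ℤ | 1 < ‖x j‖}.Finite) {j j' : ℤ} (h : j ≤ j') :
    runSup x j ≤ runSup x j' :=
  ciSup_le fun i => norm_le_runSup hfin (i.2.trans h)

lemma exists_attain (hfin : {j : ℤ | 1 < ‖x j‖}.Finite) (h0 : 1 < ‖x 0‖) :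
    ∃ k : ℤ, ‖x k‖ = totSup x := by
  classical
  have h0m : (0:ℤ) ∈ hfin.toFinset := by simp [hfin.mem_toFinset, h0]
  obtain ⟨k, hk, hmax⟩ := hfin.toFinset.exists_max_image (fun i => ‖x i‖) ⟨0, h0m⟩
  refine ⟨k, le_antisymm (norm_le_totSup hfin k) (ciSup_le fun i => ?_)⟩
  by_cases hi : 1 < ‖x i‖
  · exact hmax i (by simp [hfin.mem_toFinset, hi])
  · exact (not_lt.mp hi).trans ((le_of_lt h0).trans (hmax 0 h0m))

lemma one_lt_totSup (hfin : {j : ℤ | 1 < ‖x j‖}.Finite) (h0 : 1 < ‖x 0‖) :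
    1 < totSup x := lt_of_lt_of_le h0 (norm_le_totSup hfin 0)

lemma runSup_succ (hfin : {j : ℤ | 1 < ‖x j‖}.Finite) (j : ℤ) :
    runSup x j = max (runSup x (j - 1)) ‖x j‖ := by
  refine le_antisymm (ciSup_le fun i => ?_) (max_le (runSup_mono hfin (by omega))
    (norm_le_runSup hfin le_rfl))
  rcases lt_or_eq_of_le i.2 with h | h
  · exact le_max_of_le_left (norm_le_runSup hfin (by omega))
  · exact le_max_of_le_right (by rw [show (i : ℤ) = j from h])


lemma runSup_le_one (hfin : {j : ℤ | 1 < ‖x j‖}.Finite) {j : ℤ}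
    (hj : ∀ i : ℤ, i ≤ j → ¬ 1 < ‖x i‖) : runSup x j ≤ 1 :=
  ciSup_le fun i => not_lt.mp (hj i.1 i.2)

lemma exists_least_attain (hfin : {j : ℤ | 1 < ‖x j‖}.Finite) (h0 : 1 < ‖x 0‖) :
    ∃ j0 : ℤ, runSup x j0 = totSup x ∧ ∀ z : ℤ, runSup x z = totSup x → j0 ≤ z := by
  classical
  have hne : (insert (0:ℤ) hfin.toFinset).Nonempty := Finset.insert_nonempty _ _
  set a := (insert (0:ℤ) hfin.toFinset).min' hne with ha
  have hbdd : ∃ b : ℤ, ∀ z : ℤ, runSup x z = totSup x → b ≤ z := by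
    refine ⟨a, fun z hz => ?_⟩
    by_contra hlt
    push_neg at hlt
    have h1 : runSup x z ≤ 1 := by
      refine runSup_le_one hfin fun i hi hexc => ?_
      have : a ≤ i := Finset.min'_le _ _ (Finset.mem_insert_of_mem (hfin.mem_toFinset.2 hexc))
      omega
    have := one_lt_totSup hfin h0
    rw [hz] at h1; linarith
  have hex : ∃ z : ℤ, runSup x z = totSup x := by
    obtain ⟨k, hk⟩ := exists_attain hfin h0
    exact ⟨k, le_antisymm (runSup_le hfin k) (hk ▸ norm_le_runSup hfin le_rfl)⟩
  obtain ⟨j0, h1, h2⟩ := Int.exists_least_of_bdd hbdd hex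
  exact ⟨j0, h1, h2⟩

lemma shift_totSup (j : ℤ) : (⨆ i : ℤ, ‖x (i + j)‖) = totSup x := by
  rw [totSup, ← sSup_range, ← sSup_range]
  congr 1
  ext b
  constructor
  · rintro ⟨i, rfl⟩; exact ⟨i + j, rfl⟩
  · rintro ⟨k, rfl⟩; exact ⟨k - j, by simp [sub_add_cancel]⟩

lemma shift_runSup (j l : ℤ) :
    (⨆ i : {i : ℤ // i ≤ l}, ‖x ((i : ℤ) + j)‖) = runSup x (l + j) := by
  rw [runSup, ← sSup_range, ← sSup_range]
  congr 1
  ext b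
  constructor
  · rintro ⟨⟨i, hi⟩, rfl⟩; exact ⟨⟨i + j, by omega⟩, rfl⟩
  · rintro ⟨⟨k, hk⟩, rfl⟩; exact ⟨⟨k - j, by omega⟩, by simp [sub_add_cancel]⟩

lemma anchor_shift_iff (j : ℤ) :
    isAnchorZero (fun i => x (i + j)) ↔
      (runSup x j = totSup x ∧ ∀ k : ℤ, k < j → runSup x k ≠ totSup x) := by
  unfold isAnchorZero
  rw [shift_totSup (x := x) j]
  have h0 : (⨆ i : {i : ℤ // i ≤ 0}, ‖x ((i : ℤ) + j)‖) = runSup x j := by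
    rw [shift_runSup, zero_add]
  rw [h0]
  constructor
  · rintro ⟨h1, h2⟩
    refine ⟨h1, fun k hk => ?_⟩
    have := h2 (k - j) (by omega)
    rwa [shift_runSup, sub_add_cancel] at this
  · rintro ⟨h1, h2⟩
    refine ⟨h1, fun l hl => ?_⟩
    rw [shift_runSup]
    exact h2 (l + j) (by omega)

theorem existsUnique_anchor (hfin : {j : ℤ | 1 < ‖x j‖}.Finite) (h0 : 1 < ‖x 0‖) :
    ∃! j : ℤ, isAnchorZero (fun i => x (i + j)) := by
  obtain ⟨j0, h1, h2⟩ := exists_least_attain hfin h0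
  refine ⟨j0, ?_, fun j hj => ?_⟩
  · exact (anchor_shift_iff j0).mpr ⟨h1, fun k hk hcon => by have := h2 k hcon; omega⟩
  · obtain ⟨hj1, hj2⟩ := (anchor_shift_iff j).mp hj
    have hle : j0 ≤ j := h2 j hj1
    rcases lt_or_eq_of_le hle with h | h
    · exact absurd h1 (hj2 j0 h)
    · omega

theorem anchor_exceed (hfin : {j : ℤ | 1 < ‖x j‖}.Finite) (h0 : 1 < ‖x 0‖) {j : ℤ}
    (hj : isAnchorZero (fun i => x (i + j))) : 1 < ‖x j‖ := by
  rw [anchor_shift_iff] at hj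
  obtain ⟨h1, h2⟩ := hj
  have hlt : runSup x (j - 1) < totSup x :=
    lt_of_le_of_ne (runSup_le hfin _) (h2 (j - 1) (by omega))
  have hmax := runSup_succ hfin (x := x) j
  rw [h1] at hmax
  have hxj : ‖x j‖ = totSup x := by
    rcases max_cases (runSup x (j-1)) ‖x j‖ with ⟨he, _⟩ | ⟨he, _⟩
    · rw [he] at hmax; rw [← hmax] at hlt; linarith
    · rw [he] at hmax; exact hmax.symm
  rw [hxj]; exact one_lt_totSup hfin h0

end sups


lemma measurable_anchorSet :
    MeasurableSet {x : ℤ → EuclideanSpace ℝ (Fin d) | isAnchorZero x} := by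
  have hms : ∀ j : ℤ, Measurable
      (fun x : ℤ → EuclideanSpace ℝ (Fin d) => ⨆ i : {i : ℤ // i ≤ j}, ‖x i‖) :=
    fun j => Measurable.iSup (fun i => (measurable_pi_apply (i : ℤ)).norm)
  have hmt : Measurable (fun x : ℤ → EuclideanSpace ℝ (Fin d) => ⨆ i : ℤ, ‖x i‖) :=
    Measurable.iSup (fun i => (measurable_pi_apply i).norm)
  have hrw : {x : ℤ → EuclideanSpace ℝ (Fin d) | isAnchorZero x} =
      {x | (⨆ i : {i : ℤ // i ≤ (0:ℤ)}, ‖x i‖) = ⨆ i : ℤ, ‖x i‖} ∩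
        ⋂ j : ℤ, {x | j < 0 → (⨆ i : {i : ℤ // i ≤ j}, ‖x i‖) ≠ ⨆ i : ℤ, ‖x i‖} := by
    ext x
    simp only [isAnchorZero, Set.mem_setOf_eq, Set.mem_inter_iff, Set.mem_iInter]
  rw [hrw]
  refine (measurableSet_eq_fun (hms 0) hmt).inter (MeasurableSet.iInter fun j => ?_)
  by_cases hj : j < 0
  · have : {x : ℤ → EuclideanSpace ℝ (Fin d) |
        j < 0 → (⨆ i : {i : ℤ // i ≤ j}, ‖x i‖) ≠ ⨆ i : ℤ, ‖x i‖} =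
        {x | (⨆ i : {i : ℤ // i ≤ j}, ‖x i‖) = ⨆ i : ℤ, ‖x i‖}ᶜ := by
      ext x; simp [hj]
    rw [this]
    exact (measurableSet_eq_fun (hms j) hmt).compl
  · have : {x : ℤ → EuclideanSpace ℝ (Fin d) |
        j < 0 → (⨆ i : {i : ℤ // i ≤ j}, ‖x i‖) ≠ ⨆ i : ℤ, ‖x i‖} = Set.univ := by
      ext x; simp [hj]
    rw [this]
    exact MeasurableSet.univ

lemma tsum_card {x : ℤ → EuclideanSpace ℝ (Fin d)} (hfin : {j : ℤ | 1 < ‖x j‖}.Finite) :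
    (∑' j : ℤ, if 1 < ‖x j‖ then (1 : ℝ≥0∞) else 0) = (hfin.toFinset.card : ℝ≥0∞) := by
  classical
  rw [tsum_eq_sum (s := hfin.toFinset) (fun b hb => by
    simp only [hfin.mem_toFinset, Set.mem_setOf_eq] at hb
    simp [hb])]
  rw [Finset.sum_congr rfl (fun i hi => by
    simp only [hfin.mem_toFinset, Set.mem_setOf_eq] at hi
    simp [hi] : ∀ i ∈ hfin.toFinset, (if 1 < ‖x i‖ then (1:ℝ≥0∞) else 0) = 1)]
  simp

lemma exc_card {x : ℤ → EuclideanSpace ℝ (Fin d)} (hfin : {j : ℤ | 1 < ‖x j‖}.Finite) :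
    Exc x = (hfin.toFinset.card : ℝ) := by
  classical
  rw [Exc, tsum_eq_sum (s := hfin.toFinset) (fun b hb => by
    simp only [hfin.mem_toFinset, Set.mem_setOf_eq] at hb
    simp [hb])]
  rw [Finset.sum_congr rfl (fun i hi => by
    simp only [hfin.mem_toFinset, Set.mem_setOf_eq] at hi
    simp [hi] : ∀ i ∈ hfin.toFinset, (if 1 < ‖x i‖ then (1:ℝ) else 0) = 1)]
  simp

lemma tsum_shift (x : ℤ → EuclideanSpace ℝ (Fin d)) (j : ℤ) :
    (∑' i : ℤ, if 1 < ‖x (i + j)‖ then (1 : ℝ≥0∞) else 0)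
      = ∑' i : ℤ, if 1 < ‖x i‖ then (1 : ℝ≥0∞) else 0 :=
  Equiv.tsum_eq (Equiv.addRight j) (fun k => if 1 < ‖x k‖ then (1:ℝ≥0∞) else 0)

lemma ofReal_exceed_sum (x : ℤ → EuclideanSpace ℝ (Fin d)) (s : Finset ℤ) :
    ENNReal.ofReal (∑ i ∈ s, if 1 < ‖x i‖ then (1:ℝ) else 0)
      = ∑ i ∈ s, if 1 < ‖x i‖ then (1:ℝ≥0∞) else 0 := by
  rw [ENNReal.ofReal_sum_of_nonneg (fun i _ => by positivity)]
  exact Finset.sum_congr rfl fun i _ => by split <;> simp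

lemma sup_trunc (x : ℤ → EuclideanSpace ℝ (Fin d)) :
    (⨆ n : ℕ, ENNReal.ofReal (min (n : ℝ)
        (∑ i ∈ Finset.Icc (-(n:ℤ)) (n:ℤ), if 1 < ‖x i‖ then (1:ℝ) else 0)))
      = ∑' j : ℤ, if 1 < ‖x j‖ then (1 : ℝ≥0∞) else 0 := by
  apply le_antisymm
  · refine iSup_le fun n => ?_
    calc ENNReal.ofReal (min (n:ℝ) _) ≤ ENNReal.ofReal
          (∑ i ∈ Finset.Icc (-(n:ℤ)) (n:ℤ), if 1 < ‖x i‖ then (1:ℝ) else 0) :=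
        ENNReal.ofReal_le_ofReal (min_le_right _ _)
      _ = ∑ i ∈ Finset.Icc (-(n:ℤ)) (n:ℤ), if 1 < ‖x i‖ then (1:ℝ≥0∞) else 0 :=
        ofReal_exceed_sum x _
      _ ≤ _ := ENNReal.sum_le_tsum _
  · rw [ENNReal.tsum_eq_iSup_sum' (fun n : ℕ => Finset.Icc (-(n:ℤ)) (n:ℤ)) (fun t => by
      refine ⟨t.sup (fun i => i.natAbs), fun i hi => ?_⟩
      have h2 : i.natAbs ≤ t.sup (fun i => i.natAbs) := Finset.le_sup hi
      simp only [Finset.mem_Icc]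
      omega)]
    refine iSup_le fun n => le_iSup_of_le (2 * n + 1) ?_
    have hsub : Finset.Icc (-(n:ℤ)) (n:ℤ) ⊆ Finset.Icc (-((2*n+1 : ℕ):ℤ)) ((2*n+1 : ℕ):ℤ) := by
      apply Finset.Icc_subset_Icc <;> push_cast <;> omega
    have hcard : (∑ i ∈ Finset.Icc (-(n:ℤ)) (n:ℤ), if 1 < ‖x i‖ then (1:ℝ) else 0)
        ≤ ((2*n+1 : ℕ) : ℝ) := by
      calc _ ≤ ∑ i ∈ Finset.Icc (-(n:ℤ)) (n:ℤ), (1:ℝ) :=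
            Finset.sum_le_sum (fun i _ => by split <;> norm_num)
        _ = ((Finset.Icc (-(n:ℤ)) (n:ℤ)).card : ℝ) := by rw [Finset.sum_const]; simp
        _ ≤ _ := by
            rw [Int.card_Icc]
            have : ((n:ℤ) + 1 - -(n:ℤ)).toNat = 2*n+1 := by omega
            rw [this]
    have hmin : (∑ i ∈ Finset.Icc (-(n:ℤ)) (n:ℤ), if 1 < ‖x i‖ then (1:ℝ) else 0)
        ≤ min ((2*n+1 : ℕ):ℝ) (∑ i ∈ Finset.Icc (-((2*n+1 : ℕ):ℤ)) ((2*n+1 : ℕ):ℤ),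
          if 1 < ‖x i‖ then (1:ℝ) else 0) :=
      le_min hcard (Finset.sum_le_sum_of_subset_of_nonneg hsub (fun i _ _ => by positivity))
    calc (∑ i ∈ Finset.Icc (-(n:ℤ)) (n:ℤ), if 1 < ‖x i‖ then (1:ℝ≥0∞) else 0)
        = ENNReal.ofReal (∑ i ∈ Finset.Icc (-(n:ℤ)) (n:ℤ), if 1 < ‖x i‖ then (1:ℝ) else 0) :=
          (ofReal_exceed_sum x _).symm
      _ ≤ _ := ENNReal.ofReal_le_ofReal hmin

end Stmt10Aux

theorem stmt10 {Ω : Type*} [MeasurableSpace Ω] (μ : Measure Ω) [IsProbabilityMeasure μ]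
    {d : ℕ} (Y : Ω → ℤ → EuclideanSpace ℝ (Fin d)) (hYmeas : Measurable Y)
    (hY0gt1 : ∀ᵐ ω ∂μ, 1 < ‖Y ω 0‖)
    (hY0 : ∀ᵐ ω ∂μ, Tendsto (fun j : ℤ => ‖Y ω j‖) (cocompact ℤ) (nhds 0))
    (htc : ∀ G : (ℤ → EuclideanSpace ℝ (Fin d)) → ℝ, Measurable G →
      (∃ C, ∀ x, |G x| ≤ C) → ∀ j : ℤ,
      ∫ ω, G (Y ω) * Set.indicator {ω | 1 < ‖Y ω j‖} (fun _ => (1 : ℝ)) ω ∂μ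
        = ∫ ω, G (fun i => Y ω (i + j)) *
            Set.indicator {ω | 1 < ‖Y ω (-j)‖} (fun _ => (1 : ℝ)) ω ∂μ)
    (ϑ : ℝ) (hϑdef : ϑ = (μ {ω | isAnchorZero (Y ω)}).toReal) (hϑpos : 0 < ϑ)
    (π : ℕ → ℝ)
    (hπ : ∀ m : ℕ, π m =
      (μ ({ω | isAnchorZero (Y ω)} ∩ {ω | Exc (Y ω) = (m : ℝ)})).toReal / ϑ) :
    (∑' m : ℕ, (m : ℝ) * π m) = ϑ⁻¹ ∧
    (∑' m : ℕ, (m : ℝ) ^ 2 * π m) = ϑ⁻¹ * ∑' j : ℤ, (μ {ω | 1 < ‖Y ω j‖}).toReal := by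
  classical
  -- basic measurability
  have hYj : ∀ j : ℤ, Measurable fun ω => ‖Y ω j‖ :=
    fun j => ((measurable_pi_apply j).comp hYmeas).norm
  have hmS : ∀ j : ℤ, MeasurableSet {ω | 1 < ‖Y ω j‖} :=
    fun j => measurableSet_lt measurable_const (hYj j)
  have hσ : ∀ j : ℤ, Measurable
      (fun x : ℤ → EuclideanSpace ℝ (Fin d) => (fun i => x (i + j))) :=
    fun j => measurable_pi_lambda _ (fun i => measurable_pi_apply (i + j))
  have hmA : MeasurableSet {ω | isAnchorZero (Y ω)} := hYmeas Stmt10Aux.measurable_anchorSet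
  have hmT : ∀ j : ℤ, MeasurableSet {ω | isAnchorZero (fun i => Y ω (i + j))} :=
    fun j => (((hσ j).comp hYmeas)) Stmt10Aux.measurable_anchorSet
  have hgood : ∀ᵐ ω ∂μ, 1 < ‖Y ω 0‖ ∧
      Tendsto (fun j : ℤ => ‖Y ω j‖) (cocompact ℤ) (nhds 0) := hY0gt1.and hY0
  -- the exceedance count as an ENNReal-valued function
  set fE : Ω → ℝ≥0∞ := fun ω => ∑' j : ℤ, if 1 < ‖Y ω j‖ then (1:ℝ≥0∞) else 0 with hfE
  have hmfE : Measurable fE := by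
    apply Measurable.ennreal_tsum
    exact fun j => Measurable.ite (hmS j) measurable_const measurable_const
  -- the key lintegral time-change identity
  have hkey : ∀ G : (ℤ → EuclideanSpace ℝ (Fin d)) → ℝ, Measurable G → (∀ x, 0 ≤ G x) →
      ∀ C : ℝ, (∀ x, G x ≤ C) → ∀ j : ℤ,
      (∫⁻ ω, ENNReal.ofReal (G (Y ω)) *
          Set.indicator {ω | 1 < ‖Y ω j‖} (fun _ => (1:ℝ≥0∞)) ω ∂μ)
        = ∫⁻ ω, ENNReal.ofReal (G (fun i => Y ω (i + j))) *
            Set.indicator {ω | 1 < ‖Y ω (-j)‖} (fun _ => (1:ℝ≥0∞)) ω ∂μ := by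
    intro G hG hG0 C hGC j
    have hC0 : 0 ≤ C := le_trans (hG0 (fun _ => 0)) (hGC (fun _ => 0))
    have hbound : ∃ B, ∀ x, |G x| ≤ B :=
      ⟨C, fun x => by rw [abs_of_nonneg (hG0 x)]; exact hGC x⟩
    have hreal := htc G hG hbound j
    have hint : ∀ (g : Ω → ℝ) (s : Set Ω), Measurable g → (∀ ω, 0 ≤ g ω) → (∀ ω, g ω ≤ C) →
        MeasurableSet s → Integrable
          (fun ω => g ω * Set.indicator s (fun _ => (1:ℝ)) ω) μ := by
      intro g s hg hg0 hgC hs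
      have hm : Measurable fun ω => g ω * Set.indicator s (fun _ => (1:ℝ)) ω :=
        hg.mul (measurable_const.indicator hs)
      refine Integrable.mono' (integrable_const C) hm.aestronglyMeasurable
        (ae_of_all μ fun ω => ?_)
      by_cases hω : ω ∈ s
      · simp only [Set.indicator_of_mem hω, mul_one, Real.norm_eq_abs,
          abs_of_nonneg (hg0 ω)]
        exact hgC ω
      · simp [Set.indicator_of_notMem hω, hC0]
    have hpt : ∀ (g : Ω → ℝ) (s : Set Ω) (ω : Ω), 0 ≤ g ω →
        ENNReal.ofReal (g ω * Set.indicator s (fun _ => (1:ℝ)) ω)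
          = ENNReal.ofReal (g ω) * Set.indicator s (fun _ => (1:ℝ≥0∞)) ω := by
      intro g s ω hg0
      by_cases hω : ω ∈ s
      · simp [Set.indicator_of_mem hω]
      · simp [Set.indicator_of_notMem hω]
    have e1 := ofReal_integral_eq_lintegral_ofReal
      (hint (fun ω => G (Y ω)) _ (hG.comp hYmeas) (fun ω => hG0 _) (fun ω => hGC _) (hmS j))
      (ae_of_all μ fun ω => mul_nonneg (hG0 _) (Set.indicator_nonneg (fun _ _ => zero_le_one) ω))
    have e2 := ofReal_integral_eq_lintegral_ofReal
      (hint (fun ω => G (fun i => Y ω (i + j))) _ (hG.comp ((hσ j).comp hYmeas))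
        (fun ω => hG0 _) (fun ω => hGC _) (hmS (-j)))
      (ae_of_all μ fun ω => mul_nonneg (hG0 _) (Set.indicator_nonneg (fun _ _ => zero_le_one) ω))
    calc (∫⁻ ω, ENNReal.ofReal (G (Y ω)) *
          Set.indicator {ω | 1 < ‖Y ω j‖} (fun _ => (1:ℝ≥0∞)) ω ∂μ)
        = ∫⁻ ω, ENNReal.ofReal (G (Y ω) *
            Set.indicator {ω | 1 < ‖Y ω j‖} (fun _ => (1:ℝ)) ω) ∂μ :=
          lintegral_congr fun ω => (hpt (fun ω => G (Y ω)) {ω | 1 < ‖Y ω j‖} ω (hG0 _)).symm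
      _ = ENNReal.ofReal (∫ ω, G (Y ω) *
            Set.indicator {ω | 1 < ‖Y ω j‖} (fun _ => (1:ℝ)) ω ∂μ) := e1.symm
      _ = ENNReal.ofReal (∫ ω, G (fun i => Y ω (i + j)) *
            Set.indicator {ω | 1 < ‖Y ω (-j)‖} (fun _ => (1:ℝ)) ω ∂μ) := by rw [hreal]
      _ = ∫⁻ ω, ENNReal.ofReal (G (fun i => Y ω (i + j)) *
            Set.indicator {ω | 1 < ‖Y ω (-j)‖} (fun _ => (1:ℝ)) ω) ∂μ := e2
      _ = _ := lintegral_congr fun ω =>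
          hpt (fun ω => G (fun i => Y ω (i + j))) {ω | 1 < ‖Y ω (-j)‖} ω (hG0 _)
  
  -- R1: time change with the anchor indicator
  have R1 : ∀ j : ℤ, μ ({ω | isAnchorZero (Y ω)} ∩ {ω | 1 < ‖Y ω j‖})
      = μ ({ω | isAnchorZero (fun i => Y ω (i + j))} ∩ {ω | 1 < ‖Y ω (-j)‖}) := by
    intro j
    have h1 := hkey (Set.indicator {x | isAnchorZero x} (fun _ => (1:ℝ)))
      (measurable_const.indicator Stmt10Aux.measurable_anchorSet)
      (fun x => Set.indicator_nonneg (fun _ _ => zero_le_one) x) 1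
      (fun x => by by_cases h : x ∈ {x | isAnchorZero x} <;> simp [h]) j
    have e1 : (∫⁻ ω, ENNReal.ofReal
          (Set.indicator {x | isAnchorZero x} (fun _ => (1:ℝ)) (Y ω)) *
          Set.indicator {ω | 1 < ‖Y ω j‖} (fun _ => (1:ℝ≥0∞)) ω ∂μ)
        = μ ({ω | isAnchorZero (Y ω)} ∩ {ω | 1 < ‖Y ω j‖}) := by
      rw [← lintegral_indicator_one (hmA.inter (hmS j))]
      refine lintegral_congr fun ω => ?_
      by_cases h1 : isAnchorZero (Y ω) <;> by_cases h2 : 1 < ‖Y ω j‖ <;>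
        simp [Set.indicator_apply, Set.mem_setOf_eq, Set.mem_inter_iff, h1, h2]
    have e2 : (∫⁻ ω, ENNReal.ofReal
          (Set.indicator {x | isAnchorZero x} (fun _ => (1:ℝ)) (fun i => Y ω (i + j))) *
          Set.indicator {ω | 1 < ‖Y ω (-j)‖} (fun _ => (1:ℝ≥0∞)) ω ∂μ)
        = μ ({ω | isAnchorZero (fun i => Y ω (i + j))} ∩ {ω | 1 < ‖Y ω (-j)‖}) := by
      rw [← lintegral_indicator_one ((hmT j).inter (hmS (-j)))]
      refine lintegral_congr fun ω => ?_
      by_cases h1 : isAnchorZero (fun i => Y ω (i + j)) <;> by_cases h2 : 1 < ‖Y ω (-j)‖ <;>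
        simp [Set.indicator_apply, Set.mem_setOf_eq, Set.mem_inter_iff, h1, h2]
    rw [← e1, ← e2]
    exact h1
  -- R2: the probability that the shifted anchor holds but no exceedance at -j is zero
  have R2 : ∀ j : ℤ, μ ({ω | isAnchorZero (fun i => Y ω (i + j))} ∩
      {ω | 1 < ‖Y ω (-j)‖}ᶜ ∩ {ω | 1 < ‖Y ω j‖}) = 0 := by
    intro j
    have hmQ : MeasurableSet {x : ℤ → EuclideanSpace ℝ (Fin d) |
        isAnchorZero (fun i => x (i + j)) ∧ ¬ (1 < ‖x (-j)‖)} :=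
      ((hσ j) Stmt10Aux.measurable_anchorSet).inter
        (measurableSet_lt measurable_const (measurable_pi_apply (-j)).norm).compl
    have h1 := hkey (Set.indicator {x : ℤ → EuclideanSpace ℝ (Fin d) |
        isAnchorZero (fun i => x (i + j)) ∧ ¬ (1 < ‖x (-j)‖)} (fun _ => (1:ℝ)))
      (measurable_const.indicator hmQ)
      (fun x => Set.indicator_nonneg (fun _ _ => zero_le_one) x) 1
      (fun x => Set.indicator_apply_le' (fun _ => le_rfl) (fun _ => zero_le_one)) j
    have e1 : (∫⁻ ω, ENNReal.ofReal
          (Set.indicator {x : ℤ → EuclideanSpace ℝ (Fin d) |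
            isAnchorZero (fun i => x (i + j)) ∧ ¬ (1 < ‖x (-j)‖)} (fun _ => (1:ℝ)) (Y ω)) *
          Set.indicator {ω | 1 < ‖Y ω j‖} (fun _ => (1:ℝ≥0∞)) ω ∂μ)
        = μ ({ω | isAnchorZero (fun i => Y ω (i + j))} ∩
            {ω | 1 < ‖Y ω (-j)‖}ᶜ ∩ {ω | 1 < ‖Y ω j‖}) := by
      rw [← lintegral_indicator_one (((hmT j).inter (hmS (-j)).compl).inter (hmS j))]
      refine lintegral_congr fun ω => ?_
      by_cases h1 : isAnchorZero (fun i => Y ω (i + j)) <;> by_cases h2 : 1 < ‖Y ω (-j)‖ <;>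
        by_cases h3 : 1 < ‖Y ω j‖ <;>
        simp [Set.indicator_apply, Set.mem_setOf_eq, Set.mem_inter_iff, h1, h2, h3]
    have e2 : (∫⁻ ω, ENNReal.ofReal
          (Set.indicator {x : ℤ → EuclideanSpace ℝ (Fin d) |
            isAnchorZero (fun i => x (i + j)) ∧ ¬ (1 < ‖x (-j)‖)} (fun _ => (1:ℝ))
            (fun i => Y ω (i + j))) *
          Set.indicator {ω | 1 < ‖Y ω (-j)‖} (fun _ => (1:ℝ≥0∞)) ω ∂μ) = 0 := by
      have hz : ∀ᵐ ω ∂μ, (ENNReal.ofReal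
          (Set.indicator {x : ℤ → EuclideanSpace ℝ (Fin d) |
            isAnchorZero (fun i => x (i + j)) ∧ ¬ (1 < ‖x (-j)‖)} (fun _ => (1:ℝ))
            (fun i => Y ω (i + j))) *
          Set.indicator {ω | 1 < ‖Y ω (-j)‖} (fun _ => (1:ℝ≥0∞)) ω) = 0 := by
        filter_upwards [hY0gt1] with ω h0
        have hnm : (fun i => Y ω (i + j)) ∉ {x : ℤ → EuclideanSpace ℝ (Fin d) |
            isAnchorZero (fun i => x (i + j)) ∧ ¬ (1 < ‖x (-j)‖)} := by
          rintro ⟨-, hb⟩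
          refine hb ?_
          show (1:ℝ) < ‖Y ω (-j + j)‖
          rw [neg_add_cancel]
          exact h0
        rw [Set.indicator_of_notMem hnm]
        simp
      rw [lintegral_congr_ae hz, lintegral_zero]
    rw [← e1, h1, e2]
  -- R3: a.e. the anchor index is an exceedance
  have R3 : ∀ j : ℤ, μ ({ω | isAnchorZero (fun i => Y ω (i + j))} \ {ω | 1 < ‖Y ω j‖}) = 0 := by
    intro j
    rw [measure_eq_zero_iff_ae_notMem]
    filter_upwards [hgood] with ω hω
    rintro ⟨h1, h2⟩
    exact h2 (Stmt10Aux.anchor_exceed (Stmt10Aux.finite_exceed _ hω.2) hω.1 h1)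
  -- R4
  have R4 : ∀ j : ℤ, μ ({ω | isAnchorZero (fun i => Y ω (i + j))} \ {ω | 1 < ‖Y ω (-j)‖}) = 0 := by
    intro j
    refine measure_mono_null (fun ω hω => ?_) (measure_union_null (R2 j) (R3 j))
    obtain ⟨h1, h2⟩ := hω
    by_cases h3 : ω ∈ {ω | 1 < ‖Y ω j‖}
    · exact Or.inl ⟨⟨h1, h2⟩, h3⟩
    · exact Or.inr ⟨h1, h3⟩
  -- KEY1
  have KEY1 : ∀ j : ℤ, μ ({ω | isAnchorZero (Y ω)} ∩ {ω | 1 < ‖Y ω j‖})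
      = μ {ω | isAnchorZero (fun i => Y ω (i + j))} := by
    intro j
    rw [R1 j]
    have h := measure_inter_add_diff (μ := μ)
      {ω | isAnchorZero (fun i => Y ω (i + j))} (hmS (-j))
    rw [R4 j, add_zero] at h
    exact h
  -- R6: a.e. unique anchor
  have R6 : ∀ᵐ ω ∂μ, ∃! j : ℤ, isAnchorZero (fun i => Y ω (i + j)) := by
    filter_upwards [hgood] with ω hω
    exact Stmt10Aux.existsUnique_anchor (Stmt10Aux.finite_exceed _ hω.2) hω.1
  -- R7
  have R7 : ∀ᵐ ω ∂μ, (∑' j : ℤ, Set.indicator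
      {ω | isAnchorZero (fun i => Y ω (i + j))} (fun _ => (1:ℝ≥0∞)) ω) = 1 := by
    filter_upwards [R6] with ω hω
    obtain ⟨j0, hj0, huni⟩ := hω
    have hz : ∀ b : ℤ, b ≠ j0 → Set.indicator
        {ω | isAnchorZero (fun i => Y ω (i + b))} (fun _ => (1:ℝ≥0∞)) ω = 0 :=
      fun b hb => Set.indicator_of_notMem
        (s := {ω | isAnchorZero fun i => Y ω (i + b)})
        (fun hmem => hb (huni b hmem)) _
    exact (tsum_eq_single j0 hz).trans (Set.indicator_of_mem
      (s := {ω | isAnchorZero fun i => Y ω (i + j0)}) hj0 _)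
  -- R8
  have R8 : (∑' j : ℤ, μ {ω | isAnchorZero (fun i => Y ω (i + j))}) = 1 := by
    calc (∑' j : ℤ, μ {ω | isAnchorZero (fun i => Y ω (i + j))})
        = ∑' j : ℤ, ∫⁻ ω, Set.indicator
            {ω | isAnchorZero (fun i => Y ω (i + j))} (fun _ => (1:ℝ≥0∞)) ω ∂μ :=
          tsum_congr fun j => (lintegral_indicator_one (hmT j)).symm
      _ = ∫⁻ ω, ∑' j : ℤ, Set.indicator
            {ω | isAnchorZero (fun i => Y ω (i + j))} (fun _ => (1:ℝ≥0∞)) ω ∂μ :=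
          (lintegral_tsum (fun j => (measurable_const.indicator (hmT j)).aemeasurable)).symm
      _ = ∫⁻ _, (1:ℝ≥0∞) ∂μ := lintegral_congr_ae R7
      _ = 1 := by simp
  -- R9
  have R9 : (∑' j : ℤ, μ ({ω | isAnchorZero (Y ω)} ∩ {ω | 1 < ‖Y ω j‖})) = 1 :=
    (tsum_congr fun j => KEY1 j).trans R8
  
  -- truncated counting functionals
  set c : ℕ → (ℤ → EuclideanSpace ℝ (Fin d)) → ℝ := fun n x => min (n:ℝ)
    (∑ i ∈ Finset.Icc (-(n:ℤ)) (n:ℤ), if 1 < ‖x i‖ then (1:ℝ) else 0) with hc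
  have hcm : ∀ n, Measurable (c n) := fun n =>
    measurable_const.min (Finset.measurable_sum _ (fun i _ =>
      Measurable.ite (measurableSet_lt measurable_const (measurable_pi_apply i).norm)
        measurable_const measurable_const))
  have hc0 : ∀ n x, 0 ≤ c n x := fun n x => le_min (by positivity)
    (Finset.sum_nonneg fun i _ => by positivity)
  have hcC : ∀ n x, c n x ≤ (n:ℝ) := fun n x => min_le_left _ _
  have hcmono : ∀ x, Monotone fun n => ENNReal.ofReal (c n x) := by
    intro x n m hnm
    apply ENNReal.ofReal_le_ofReal
    refine min_le_min (by exact_mod_cast hnm) (Finset.sum_le_sum_of_subset_of_nonneg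
      (Finset.Icc_subset_Icc (by omega) (by omega)) (fun i _ _ => by positivity))
  have hcsup : ∀ x : ℤ → EuclideanSpace ℝ (Fin d),
      (⨆ n : ℕ, ENNReal.ofReal (c n x)) = ∑' j : ℤ, if 1 < ‖x j‖ then (1:ℝ≥0∞) else 0 :=
    fun x => Stmt10Aux.sup_trunc x
  -- KEY2
  have KEY2 : ∀ j : ℤ,
      (∫⁻ ω, Set.indicator {ω | isAnchorZero (Y ω)} (fun _ => (1:ℝ≥0∞)) ω * fE ω *
        Set.indicator {ω | 1 < ‖Y ω j‖} (fun _ => (1:ℝ≥0∞)) ω ∂μ)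
      = ∫⁻ ω, Set.indicator {ω | isAnchorZero (fun i => Y ω (i + j))}
          (fun _ => (1:ℝ≥0∞)) ω * fE ω ∂μ := by
    intro j
    have hn : ∀ n : ℕ,
        (∫⁻ ω, Set.indicator {ω | isAnchorZero (Y ω)} (fun _ => (1:ℝ≥0∞)) ω *
            ENNReal.ofReal (c n (Y ω)) *
            Set.indicator {ω | 1 < ‖Y ω j‖} (fun _ => (1:ℝ≥0∞)) ω ∂μ)
        = ∫⁻ ω, Set.indicator {ω | isAnchorZero (fun i => Y ω (i + j))}
            (fun _ => (1:ℝ≥0∞)) ω *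
            ENNReal.ofReal (c n (fun i => Y ω (i + j))) *
            Set.indicator {ω | 1 < ‖Y ω (-j)‖} (fun _ => (1:ℝ≥0∞)) ω ∂μ := by
      intro n
      have hG : Measurable (fun x : ℤ → EuclideanSpace ℝ (Fin d) =>
          Set.indicator {x | isAnchorZero x} (fun _ => (1:ℝ)) x * c n x) :=
        (measurable_const.indicator Stmt10Aux.measurable_anchorSet).mul (hcm n)
      have h1 := hkey _ hG (fun x => mul_nonneg
          (Set.indicator_nonneg (fun _ _ => zero_le_one) x) (hc0 n x))
        (n:ℝ) (fun x => by
          calc Set.indicator {x | isAnchorZero x} (fun _ => (1:ℝ)) x * c n x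
              ≤ 1 * c n x := mul_le_mul_of_nonneg_right
                (Set.indicator_apply_le' (fun _ => le_rfl) (fun _ => zero_le_one)) (hc0 n x)
            _ = c n x := one_mul _
            _ ≤ (n:ℝ) := hcC n x) j
      refine Eq.trans (lintegral_congr fun ω => ?_) (h1.trans (lintegral_congr fun ω => ?_))
      · by_cases hA' : isAnchorZero (Y ω) <;>
          simp [Set.indicator_apply, Set.mem_setOf_eq, hA']
      · by_cases hA' : isAnchorZero (fun i => Y ω (i + j)) <;>
          simp [Set.indicator_apply, Set.mem_setOf_eq, hA']
    have hLHS : (⨆ n : ℕ, ∫⁻ ω, Set.indicator {ω | isAnchorZero (Y ω)} (fun _ => (1:ℝ≥0∞)) ω *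
          ENNReal.ofReal (c n (Y ω)) *
          Set.indicator {ω | 1 < ‖Y ω j‖} (fun _ => (1:ℝ≥0∞)) ω ∂μ)
        = ∫⁻ ω, Set.indicator {ω | isAnchorZero (Y ω)} (fun _ => (1:ℝ≥0∞)) ω * fE ω *
          Set.indicator {ω | 1 < ‖Y ω j‖} (fun _ => (1:ℝ≥0∞)) ω ∂μ := by
      rw [← lintegral_iSup (f := fun (n : ℕ) (ω : Ω) =>
          Set.indicator {ω | isAnchorZero (Y ω)} (fun _ => (1:ℝ≥0∞)) ω *
          ENNReal.ofReal (c n (Y ω)) *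
          Set.indicator {ω | 1 < ‖Y ω j‖} (fun _ => (1:ℝ≥0∞)) ω)
        (fun n => ((measurable_const.indicator hmA).mul
          (ENNReal.measurable_ofReal.comp ((hcm n).comp hYmeas))).mul
          (measurable_const.indicator (hmS j)))
        (fun n m hnm ω => mul_le_mul' (mul_le_mul' le_rfl (hcmono (Y ω) hnm)) le_rfl)]
      refine lintegral_congr fun ω => ?_
      rw [iSup_congr (fun n => mul_right_comm
          (Set.indicator {ω | isAnchorZero (Y ω)} (fun _ => (1:ℝ≥0∞)) ω)
          (ENNReal.ofReal (c n (Y ω)))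
          (Set.indicator {ω | 1 < ‖Y ω j‖} (fun _ => (1:ℝ≥0∞)) ω)),
        ← ENNReal.mul_iSup, hcsup (Y ω), mul_right_comm]
    have hRHS : (⨆ n : ℕ, ∫⁻ ω, Set.indicator {ω | isAnchorZero (fun i => Y ω (i + j))}
          (fun _ => (1:ℝ≥0∞)) ω * ENNReal.ofReal (c n (fun i => Y ω (i + j))) *
          Set.indicator {ω | 1 < ‖Y ω (-j)‖} (fun _ => (1:ℝ≥0∞)) ω ∂μ)
        = ∫⁻ ω, Set.indicator {ω | isAnchorZero (fun i => Y ω (i + j))}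
          (fun _ => (1:ℝ≥0∞)) ω * fE ω *
          Set.indicator {ω | 1 < ‖Y ω (-j)‖} (fun _ => (1:ℝ≥0∞)) ω ∂μ := by
      rw [← lintegral_iSup (f := fun (n : ℕ) (ω : Ω) =>
          Set.indicator {ω | isAnchorZero (fun i => Y ω (i + j))} (fun _ => (1:ℝ≥0∞)) ω *
          ENNReal.ofReal (c n (fun i => Y ω (i + j))) *
          Set.indicator {ω | 1 < ‖Y ω (-j)‖} (fun _ => (1:ℝ≥0∞)) ω)
        (fun n => ((measurable_const.indicator (hmT j)).mul
          (ENNReal.measurable_ofReal.comp ((hcm n).comp ((hσ j).comp hYmeas)))).mul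
          (measurable_const.indicator (hmS (-j))))
        (fun n m hnm ω => mul_le_mul' (mul_le_mul' le_rfl
          (hcmono (fun i => Y ω (i + j)) hnm)) le_rfl)]
      refine lintegral_congr fun ω => ?_
      rw [iSup_congr (fun n => mul_right_comm
          (Set.indicator {ω | isAnchorZero (fun i => Y ω (i + j))} (fun _ => (1:ℝ≥0∞)) ω)
          (ENNReal.ofReal (c n (fun i => Y ω (i + j))))
          (Set.indicator {ω | 1 < ‖Y ω (-j)‖} (fun _ => (1:ℝ≥0∞)) ω)),
        ← ENNReal.mul_iSup, hcsup (fun i => Y ω (i + j))]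
      rw [show (∑' i : ℤ, if 1 < ‖Y ω (i + j)‖ then (1:ℝ≥0∞) else 0) = fE ω from
        Stmt10Aux.tsum_shift (Y ω) j, mul_right_comm]
    have hdrop : (∫⁻ ω, Set.indicator {ω | isAnchorZero (fun i => Y ω (i + j))}
          (fun _ => (1:ℝ≥0∞)) ω * fE ω *
          Set.indicator {ω | 1 < ‖Y ω (-j)‖} (fun _ => (1:ℝ≥0∞)) ω ∂μ)
        = ∫⁻ ω, Set.indicator {ω | isAnchorZero (fun i => Y ω (i + j))}
          (fun _ => (1:ℝ≥0∞)) ω * fE ω ∂μ := by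
      apply lintegral_congr_ae
      filter_upwards [(measure_eq_zero_iff_ae_notMem).1 (R4 j)] with ω hω
      by_cases hT' : isAnchorZero (fun i => Y ω (i + j))
      · have hS' : ω ∈ {ω | 1 < ‖Y ω (-j)‖} := by
          by_contra hc'
          exact hω ⟨hT', hc'⟩
        rw [Set.indicator_of_mem hS', mul_one]
      · rw [Set.indicator_of_notMem
          (s := {ω | isAnchorZero (fun i => Y ω (i + j))}) hT']
        simp
    calc (∫⁻ ω, Set.indicator {ω | isAnchorZero (Y ω)} (fun _ => (1:ℝ≥0∞)) ω * fE ω *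
          Set.indicator {ω | 1 < ‖Y ω j‖} (fun _ => (1:ℝ≥0∞)) ω ∂μ)
        = ⨆ n : ℕ, ∫⁻ ω, Set.indicator {ω | isAnchorZero (Y ω)} (fun _ => (1:ℝ≥0∞)) ω *
            ENNReal.ofReal (c n (Y ω)) *
            Set.indicator {ω | 1 < ‖Y ω j‖} (fun _ => (1:ℝ≥0∞)) ω ∂μ := hLHS.symm
      _ = ⨆ n : ℕ, ∫⁻ ω, Set.indicator {ω | isAnchorZero (fun i => Y ω (i + j))}
            (fun _ => (1:ℝ≥0∞)) ω * ENNReal.ofReal (c n (fun i => Y ω (i + j))) *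
            Set.indicator {ω | 1 < ‖Y ω (-j)‖} (fun _ => (1:ℝ≥0∞)) ω ∂μ := iSup_congr hn
      _ = _ := hRHS.trans hdrop
  
  -- first moment integral
  have hS1 : (∫⁻ ω, Set.indicator {ω | isAnchorZero (Y ω)} (fun _ => (1:ℝ≥0∞)) ω * fE ω ∂μ)
      = 1 := by
    calc (∫⁻ ω, Set.indicator {ω | isAnchorZero (Y ω)} (fun _ => (1:ℝ≥0∞)) ω * fE ω ∂μ)
        = ∫⁻ ω, ∑' j : ℤ, (Set.indicator {ω | isAnchorZero (Y ω)} (fun _ => (1:ℝ≥0∞)) ω *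
            (if 1 < ‖Y ω j‖ then (1:ℝ≥0∞) else 0)) ∂μ := by
          refine lintegral_congr fun ω => ?_
          rw [ENNReal.tsum_mul_left]
      _ = ∑' j : ℤ, ∫⁻ ω, Set.indicator {ω | isAnchorZero (Y ω)} (fun _ => (1:ℝ≥0∞)) ω *
            (if 1 < ‖Y ω j‖ then (1:ℝ≥0∞) else 0) ∂μ :=
          lintegral_tsum (fun j => ((measurable_const.indicator hmA).mul
            (Measurable.ite (hmS j) measurable_const measurable_const)).aemeasurable)
      _ = ∑' j : ℤ, μ ({ω | isAnchorZero (Y ω)} ∩ {ω | 1 < ‖Y ω j‖}) := by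
          refine tsum_congr fun j => ?_
          rw [← lintegral_indicator_one (hmA.inter (hmS j))]
          refine lintegral_congr fun ω => ?_
          by_cases h1 : isAnchorZero (Y ω) <;> by_cases h2 : 1 < ‖Y ω j‖ <;>
            simp [Set.indicator_apply, Set.mem_setOf_eq, Set.mem_inter_iff, h1, h2]
      _ = 1 := R9
  -- second moment integral
  have hS2 : (∫⁻ ω, Set.indicator {ω | isAnchorZero (Y ω)} (fun _ => (1:ℝ≥0∞)) ω *
        fE ω * fE ω ∂μ) = ∑' j : ℤ, μ {ω | 1 < ‖Y ω j‖} := by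
    calc (∫⁻ ω, Set.indicator {ω | isAnchorZero (Y ω)} (fun _ => (1:ℝ≥0∞)) ω *
          fE ω * fE ω ∂μ)
        = ∫⁻ ω, ∑' j : ℤ, (Set.indicator {ω | isAnchorZero (Y ω)} (fun _ => (1:ℝ≥0∞)) ω *
            fE ω * (if 1 < ‖Y ω j‖ then (1:ℝ≥0∞) else 0)) ∂μ := by
          refine lintegral_congr fun ω => ?_
          rw [ENNReal.tsum_mul_left]
      _ = ∑' j : ℤ, ∫⁻ ω, Set.indicator {ω | isAnchorZero (Y ω)} (fun _ => (1:ℝ≥0∞)) ω *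
            fE ω * (if 1 < ‖Y ω j‖ then (1:ℝ≥0∞) else 0) ∂μ :=
          lintegral_tsum (fun j => (((measurable_const.indicator hmA).mul hmfE).mul
            (Measurable.ite (hmS j) measurable_const measurable_const)).aemeasurable)
      _ = ∑' j : ℤ, ∫⁻ ω, Set.indicator {ω | isAnchorZero (fun i => Y ω (i + j))}
            (fun _ => (1:ℝ≥0∞)) ω * fE ω ∂μ := by
          refine tsum_congr fun j => ?_
          refine Eq.trans (lintegral_congr fun ω => ?_) (KEY2 j)
          by_cases h2 : 1 < ‖Y ω j‖ <;>
            simp [Set.indicator_apply, Set.mem_setOf_eq, h2]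
      _ = ∫⁻ ω, (∑' j : ℤ, Set.indicator {ω | isAnchorZero (fun i => Y ω (i + j))}
            (fun _ => (1:ℝ≥0∞)) ω) * fE ω ∂μ := by
          rw [← lintegral_tsum (f := fun j ω => Set.indicator
              {ω | isAnchorZero (fun i => Y ω (i + j))} (fun _ => (1:ℝ≥0∞)) ω * fE ω)
            (fun j => ((measurable_const.indicator (hmT j)).mul
            hmfE).aemeasurable)]
          refine lintegral_congr fun ω => ?_
          rw [ENNReal.tsum_mul_right]
      _ = ∫⁻ ω, fE ω ∂μ := by
          refine lintegral_congr_ae ?_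
          filter_upwards [R7] with ω hω
          rw [hω, one_mul]
      _ = ∑' j : ℤ, μ {ω | 1 < ‖Y ω j‖} := by
          rw [hfE]
          rw [lintegral_tsum (fun j => (Measurable.ite (hmS j) measurable_const
            measurable_const).aemeasurable)]
          refine tsum_congr fun j => ?_
          rw [← lintegral_indicator_one (hmS j)]
          refine lintegral_congr fun ω => ?_
          by_cases h2 : 1 < ‖Y ω j‖ <;> simp [Set.indicator_apply, Set.mem_setOf_eq, h2]
  -- identify the Exc-level sets with fE-level sets
  have hmFm : ∀ m : ℕ, MeasurableSet {ω | fE ω = (m:ℝ≥0∞)} :=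
    fun m => hmfE (measurableSet_singleton _)
  have hEm : ∀ m : ℕ, μ ({ω | isAnchorZero (Y ω)} ∩ {ω | Exc (Y ω) = (m:ℝ)})
      = μ ({ω | isAnchorZero (Y ω)} ∩ {ω | fE ω = (m:ℝ≥0∞)}) := by
    intro m
    refine measure_congr (Filter.eventuallyEq_set.2 ?_)
    filter_upwards [hgood] with ω hω
    have hfin := Stmt10Aux.finite_exceed _ hω.2
    have h1 : Exc (Y ω) = (hfin.toFinset.card : ℝ) := Stmt10Aux.exc_card hfin
    have h2 : fE ω = (hfin.toFinset.card : ℝ≥0∞) := Stmt10Aux.tsum_card hfin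
    simp only [Set.mem_inter_iff, Set.mem_setOf_eq, h1, h2, Nat.cast_inj]
  -- moment sums over cluster sizes
  have hMom1 : (∑' m : ℕ, (m:ℝ≥0∞) *
        μ ({ω | isAnchorZero (Y ω)} ∩ {ω | fE ω = (m:ℝ≥0∞)}))
      = ∫⁻ ω, Set.indicator {ω | isAnchorZero (Y ω)} (fun _ => (1:ℝ≥0∞)) ω * fE ω ∂μ := by
    calc (∑' m : ℕ, (m:ℝ≥0∞) * μ ({ω | isAnchorZero (Y ω)} ∩ {ω | fE ω = (m:ℝ≥0∞)}))
        = ∑' m : ℕ, ∫⁻ ω, (m:ℝ≥0∞) * Set.indicator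
            ({ω | isAnchorZero (Y ω)} ∩ {ω | fE ω = (m:ℝ≥0∞)}) (fun _ => (1:ℝ≥0∞)) ω ∂μ := by
          refine tsum_congr fun m => ?_
          rw [← lintegral_indicator_one (hmA.inter (hmFm m)),
            ← lintegral_const_mul _ (measurable_one.indicator (hmA.inter (hmFm m)))]
          exact lintegral_congr fun ω => rfl
      _ = ∫⁻ ω, ∑' m : ℕ, (m:ℝ≥0∞) * Set.indicator
            ({ω | isAnchorZero (Y ω)} ∩ {ω | fE ω = (m:ℝ≥0∞)}) (fun _ => (1:ℝ≥0∞)) ω ∂μ :=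
          (lintegral_tsum (fun m => (measurable_const.mul
            (measurable_const.indicator (hmA.inter (hmFm m)))).aemeasurable)).symm
      _ = ∫⁻ ω, Set.indicator {ω | isAnchorZero (Y ω)} (fun _ => (1:ℝ≥0∞)) ω * fE ω ∂μ := by
          refine lintegral_congr_ae ?_
          filter_upwards [hgood] with ω hω
          have hfin := Stmt10Aux.finite_exceed _ hω.2
          have h2 : fE ω = (hfin.toFinset.card : ℝ≥0∞) := Stmt10Aux.tsum_card hfin
          have hz : ∀ m : ℕ, m ≠ hfin.toFinset.card → (m:ℝ≥0∞) * Set.indicator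
              ({ω | isAnchorZero (Y ω)} ∩ {ω | fE ω = (m:ℝ≥0∞)}) (fun _ => (1:ℝ≥0∞)) ω = 0 := by
            intro m hm
            rw [Set.indicator_of_notMem, mul_zero]
            rintro ⟨-, hmem⟩
            rw [Set.mem_setOf_eq, h2, Nat.cast_inj] at hmem
            exact hm hmem.symm
          rw [tsum_eq_single hfin.toFinset.card hz]
          by_cases hA' : isAnchorZero (Y ω)
          · rw [Set.indicator_of_mem (show ω ∈ {ω | isAnchorZero (Y ω)} ∩
                {ω | fE ω = ((hfin.toFinset.card : ℕ):ℝ≥0∞)} from ⟨hA', h2⟩),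
              Set.indicator_of_mem (s := {ω | isAnchorZero (Y ω)}) hA', mul_one, one_mul, h2]
          · rw [Set.indicator_of_notMem (s := {ω | isAnchorZero (Y ω)} ∩
                {ω | fE ω = ((hfin.toFinset.card : ℕ):ℝ≥0∞)}) (a := ω)
                (fun hmem => hA' hmem.1),
              Set.indicator_of_notMem (s := {ω | isAnchorZero (Y ω)}) hA', mul_zero, zero_mul]
  have hMom2 : (∑' m : ℕ, (m:ℝ≥0∞)^2 *
        μ ({ω | isAnchorZero (Y ω)} ∩ {ω | fE ω = (m:ℝ≥0∞)}))
      = ∫⁻ ω, Set.indicator {ω | isAnchorZero (Y ω)} (fun _ => (1:ℝ≥0∞)) ω *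
          fE ω * fE ω ∂μ := by
    calc (∑' m : ℕ, (m:ℝ≥0∞)^2 * μ ({ω | isAnchorZero (Y ω)} ∩ {ω | fE ω = (m:ℝ≥0∞)}))
        = ∑' m : ℕ, ∫⁻ ω, (m:ℝ≥0∞)^2 * Set.indicator
            ({ω | isAnchorZero (Y ω)} ∩ {ω | fE ω = (m:ℝ≥0∞)}) (fun _ => (1:ℝ≥0∞)) ω ∂μ := by
          refine tsum_congr fun m => ?_
          rw [← lintegral_indicator_one (hmA.inter (hmFm m)),
            ← lintegral_const_mul _ (measurable_one.indicator (hmA.inter (hmFm m)))]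
          exact lintegral_congr fun ω => rfl
      _ = ∫⁻ ω, ∑' m : ℕ, (m:ℝ≥0∞)^2 * Set.indicator
            ({ω | isAnchorZero (Y ω)} ∩ {ω | fE ω = (m:ℝ≥0∞)}) (fun _ => (1:ℝ≥0∞)) ω ∂μ :=
          (lintegral_tsum (fun m => (measurable_const.mul
            (measurable_const.indicator (hmA.inter (hmFm m)))).aemeasurable)).symm
      _ = ∫⁻ ω, Set.indicator {ω | isAnchorZero (Y ω)} (fun _ => (1:ℝ≥0∞)) ω *
            fE ω * fE ω ∂μ := by
          refine lintegral_congr_ae ?_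
          filter_upwards [hgood] with ω hω
          have hfin := Stmt10Aux.finite_exceed _ hω.2
          have h2 : fE ω = (hfin.toFinset.card : ℝ≥0∞) := Stmt10Aux.tsum_card hfin
          have hz : ∀ m : ℕ, m ≠ hfin.toFinset.card → (m:ℝ≥0∞)^2 * Set.indicator
              ({ω | isAnchorZero (Y ω)} ∩ {ω | fE ω = (m:ℝ≥0∞)}) (fun _ => (1:ℝ≥0∞)) ω = 0 := by
            intro m hm
            rw [Set.indicator_of_notMem, mul_zero]
            rintro ⟨-, hmem⟩
            rw [Set.mem_setOf_eq, h2, Nat.cast_inj] at hmem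
            exact hm hmem.symm
          rw [tsum_eq_single hfin.toFinset.card hz]
          by_cases hA' : isAnchorZero (Y ω)
          · rw [Set.indicator_of_mem (show ω ∈ {ω | isAnchorZero (Y ω)} ∩
                {ω | fE ω = ((hfin.toFinset.card : ℕ):ℝ≥0∞)} from ⟨hA', h2⟩),
              Set.indicator_of_mem (s := {ω | isAnchorZero (Y ω)}) hA', mul_one, one_mul, h2,
              pow_two]
          · rw [Set.indicator_of_notMem (s := {ω | isAnchorZero (Y ω)} ∩
                {ω | fE ω = ((hfin.toFinset.card : ℕ):ℝ≥0∞)}) (a := ω)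
                (fun hmem => hA' hmem.1),
              Set.indicator_of_notMem (s := {ω | isAnchorZero (Y ω)}) hA', mul_zero,
              zero_mul, zero_mul]
  -- final conversions
  have hfin1 : (∑' m : ℕ, (m:ℝ≥0∞) *
      μ ({ω | isAnchorZero (Y ω)} ∩ {ω | fE ω = (m:ℝ≥0∞)})) = 1 := hMom1.trans hS1
  have hfin2 : (∑' m : ℕ, (m:ℝ≥0∞)^2 *
      μ ({ω | isAnchorZero (Y ω)} ∩ {ω | fE ω = (m:ℝ≥0∞)}))
      = ∑' j : ℤ, μ {ω | 1 < ‖Y ω j‖} := hMom2.trans hS2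
  constructor
  · calc (∑' m : ℕ, (m : ℝ) * π m)
        = ∑' m : ℕ, ((m:ℝ≥0∞) *
            μ ({ω | isAnchorZero (Y ω)} ∩ {ω | fE ω = (m:ℝ≥0∞)})).toReal * ϑ⁻¹ := by
          refine tsum_congr fun m => ?_
          rw [hπ m, hEm m, div_eq_mul_inv, ENNReal.toReal_mul, ← mul_assoc,
            ENNReal.toReal_natCast]
      _ = (∑' m : ℕ, ((m:ℝ≥0∞) *
            μ ({ω | isAnchorZero (Y ω)} ∩ {ω | fE ω = (m:ℝ≥0∞)})).toReal) * ϑ⁻¹ :=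
          tsum_mul_right
      _ = ((∑' m : ℕ, (m:ℝ≥0∞) *
            μ ({ω | isAnchorZero (Y ω)} ∩ {ω | fE ω = (m:ℝ≥0∞)})).toReal) * ϑ⁻¹ := by
          rw [ENNReal.tsum_toReal_eq (fun m => ENNReal.mul_ne_top
            (ENNReal.natCast_ne_top m) (measure_ne_top μ _))]
      _ = ϑ⁻¹ := by rw [hfin1, ENNReal.toReal_one, one_mul]
  · calc (∑' m : ℕ, (m : ℝ)^2 * π m)
        = ∑' m : ℕ, ((m:ℝ≥0∞)^2 *
            μ ({ω | isAnchorZero (Y ω)} ∩ {ω | fE ω = (m:ℝ≥0∞)})).toReal * ϑ⁻¹ := by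
          refine tsum_congr fun m => ?_
          rw [hπ m, hEm m, div_eq_mul_inv, ENNReal.toReal_mul, ← mul_assoc,
            ENNReal.toReal_pow, ENNReal.toReal_natCast]
      _ = (∑' m : ℕ, ((m:ℝ≥0∞)^2 *
            μ ({ω | isAnchorZero (Y ω)} ∩ {ω | fE ω = (m:ℝ≥0∞)})).toReal) * ϑ⁻¹ :=
          tsum_mul_right
      _ = ((∑' m : ℕ, (m:ℝ≥0∞)^2 *
            μ ({ω | isAnchorZero (Y ω)} ∩ {ω | fE ω = (m:ℝ≥0∞)})).toReal) * ϑ⁻¹ := by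
          rw [ENNReal.tsum_toReal_eq (fun m => ENNReal.mul_ne_top
            (ENNReal.pow_ne_top (ENNReal.natCast_ne_top m)) (measure_ne_top μ _))]
      _ = ((∑' j : ℤ, μ {ω | 1 < ‖Y ω j‖}).toReal) * ϑ⁻¹ := by rw [hfin2]
      _ = ϑ⁻¹ * ∑' j : ℤ, (μ {ω | 1 < ‖Y ω j‖}).toReal := by
          rw [ENNReal.tsum_toReal_eq (fun j => measure_ne_top μ _), mul_comm]
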